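/- In a cubic partial cube that is not a 3-cube, if two isometric 6-cycles share two consecutive edges, say the 6-cycles (v0 v1 v2 v3 v4 v5) and (v0 v1 v2 u3 u4 u5) with common path v0 v1 v2, then there exists a vertex x adjacent to both u4 and v4. -/

import Mathlib

open SimpleGraph

/-- A partial cube: a connected graph admitting an isometric embedding into a hypercube,
i.e. an injective map to `{0,1}^n` such that Hamming distance equals graph distance. -/
def IsPartialCube {V : Type} (G : SimpleGraph V) : Prop :=
  G.Connected ∧ ∃ (n : ℕ) (f : V → (Fin n → Bool)),
    Function.Injective f ∧ ∀ u v : V, hammingDist (f u) (f v) = G.dist u v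

/-- The 3-dimensional hypercube `Q_3 = K_2 □ K_2 □ K_2`. -/
def Q3 : SimpleGraph (Fin 2 × (Fin 2 × Fin 2)) :=
  completeGraph (Fin 2) □ (completeGraph (Fin 2) □ completeGraph (Fin 2))

private lemma bool_ne_trans (x y z : Bool) : (x ≠ z) ↔ Xor' (x ≠ y) (y ≠ z) := by
  revert x y z; unfold Xor'; decide

private lemma xor_aux1 (A B : Prop) : Xor' (Xor' A B) A ↔ B := by
  by_cases hA : A <;> by_cases hB : B <;> simp_all [Xor']

private lemma xor_aux2 (A B C X : Prop) (t1 : ¬(A ∧ B)) (t2 : ¬(A ∧ C)) (t3 : ¬(A ∧ X))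
    (t4 : ¬(B ∧ C)) (t5 : ¬(B ∧ X)) (t6 : ¬(C ∧ X)) :
    Xor' (Xor' (Xor' A B) C) X ↔ (A ∨ B ∨ C ∨ X) := by
  by_cases hA : A <;> by_cases hB : B <;> by_cases hC : C <;> by_cases hX : X <;>
    simp_all [Xor']

private lemma xor_aux3 (A C D : Prop) (t1 : ¬(A ∧ C)) (t2 : ¬(A ∧ D)) (t3 : ¬(C ∧ D)) :
    Xor' (Xor' A D) (Xor' C A) ↔ (C ∨ D) := by
  by_cases hA : A <;> by_cases hC : C <;> by_cases hD : D <;> simp_all [Xor']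

private lemma hamming_card {n : ℕ} (x y : Fin n → Bool) (S : Finset (Fin n))
    (h : ∀ i, x i ≠ y i ↔ i ∈ S) : hammingDist x y = S.card := by
  unfold hammingDist
  congr 1
  ext i
  simp [h i]

set_option maxHeartbeats 2000000 in
theorem two_isometric_sixCycles_common_neighbor {V : Type} (G : SimpleGraph V)
    (hG : IsPartialCube G) (hcubic : ∀ v : V, (G.neighborSet v).ncard = 3)
    (hnotQ3 : ¬ Nonempty (G ≃g Q3))
    (v0 v1 v2 v3 v4 v5 u3 u4 u5 : V)
    (hdist : List.Pairwise (· ≠ ·) [v0, v1, v2, v3, v4, v5, u3, u4, u5])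
    (a01 : G.Adj v0 v1) (a12 : G.Adj v1 v2) (a23 : G.Adj v2 v3)
    (a34 : G.Adj v3 v4) (a45 : G.Adj v4 v5) (a50 : G.Adj v5 v0)
    (b23 : G.Adj v2 u3) (b34 : G.Adj u3 u4) (b45 : G.Adj u4 u5) (b50 : G.Adj u5 v0)
    (d02 : G.dist v0 v2 = 2) (d13 : G.dist v1 v3 = 2) (d24 : G.dist v2 v4 = 2)
    (d35 : G.dist v3 v5 = 2) (d40 : G.dist v4 v0 = 2) (d51 : G.dist v5 v1 = 2)
    (d03 : G.dist v0 v3 = 3) (d14 : G.dist v1 v4 = 3) (d25 : G.dist v2 v5 = 3)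
    (e13 : G.dist v1 u3 = 2) (e24 : G.dist v2 u4 = 2) (e35 : G.dist u3 u5 = 2)
    (e40 : G.dist u4 v0 = 2) (e51 : G.dist u5 v1 = 2)
    (e03 : G.dist v0 u3 = 3) (e14 : G.dist v1 u4 = 3) (e25 : G.dist v2 u5 = 3) :
    ∃ x : V, G.Adj u4 x ∧ G.Adj v4 x := by
  obtain ⟨hconn, n, f, hinj, hdham⟩ := hG
  -- extract the coordinate flipped by each edge
  have edge : ∀ u v : V, G.Adj u v → ∃ a : Fin n, ∀ i, f u i ≠ f v i ↔ i = a := by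
    intro u v huv
    have h1 : hammingDist (f u) (f v) = 1 :=
      (hdham u v).trans (SimpleGraph.dist_eq_one_iff_adj.mpr huv)
    unfold hammingDist at h1
    obtain ⟨a, ha⟩ := Finset.card_eq_one.mp h1
    refine ⟨a, fun i => ?_⟩
    have := Finset.ext_iff.mp ha i
    simpa using this
  obtain ⟨a, Ha⟩ := edge v0 v1 a01
  obtain ⟨b, Hb⟩ := edge v1 v2 a12
  obtain ⟨c, Hc⟩ := edge v2 v3 a23
  obtain ⟨x, Hx⟩ := edge v3 v4 a34
  obtain ⟨d, Hd⟩ := edge v2 u3 b23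
  obtain ⟨p, Hp⟩ := edge u3 u4 b34
  -- difference-set characterizations along the cycles
  have D02 : ∀ i, (f v0 i ≠ f v2 i) ↔ Xor' (i = a) (i = b) := fun i => by
    rw [bool_ne_trans (f v0 i) (f v1 i) (f v2 i), Ha i, Hb i]
  have D03 : ∀ i, (f v0 i ≠ f v3 i) ↔ Xor' (Xor' (i = a) (i = b)) (i = c) := fun i => by
    rw [bool_ne_trans (f v0 i) (f v2 i) (f v3 i), D02 i, Hc i]
  have D04 : ∀ i, (f v0 i ≠ f v4 i) ↔ Xor' (Xor' (Xor' (i = a) (i = b)) (i = c)) (i = x) :=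
    fun i => by
      rw [bool_ne_trans (f v0 i) (f v3 i) (f v4 i), D03 i, Hx i]
  have D13 : ∀ i, (f v1 i ≠ f v3 i) ↔ Xor' (i = b) (i = c) := fun i => by
    rw [bool_ne_trans (f v1 i) (f v2 i) (f v3 i), Hb i, Hc i]
  have D14 : ∀ i, (f v1 i ≠ f v4 i) ↔ Xor' (Xor' (i = b) (i = c)) (i = x) := fun i => by
    rw [bool_ne_trans (f v1 i) (f v3 i) (f v4 i), D13 i, Hx i]
  have D24 : ∀ i, (f v2 i ≠ f v4 i) ↔ Xor' (i = c) (i = x) := fun i => by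
    rw [bool_ne_trans (f v2 i) (f v3 i) (f v4 i), Hc i, Hx i]
  have E13 : ∀ i, (f v1 i ≠ f u3 i) ↔ Xor' (i = b) (i = d) := fun i => by
    rw [bool_ne_trans (f v1 i) (f v2 i) (f u3 i), Hb i, Hd i]
  have E03 : ∀ i, (f v0 i ≠ f u3 i) ↔ Xor' (Xor' (i = a) (i = b)) (i = d) := fun i => by
    rw [bool_ne_trans (f v0 i) (f v2 i) (f u3 i), D02 i, Hd i]
  have E04 : ∀ i, (f v0 i ≠ f u4 i) ↔ Xor' (Xor' (Xor' (i = a) (i = b)) (i = d)) (i = p) :=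
    fun i => by
      rw [bool_ne_trans (f v0 i) (f u3 i) (f u4 i), E03 i, Hp i]
  have E14 : ∀ i, (f v1 i ≠ f u4 i) ↔ Xor' (Xor' (i = b) (i = d)) (i = p) := fun i => by
    rw [bool_ne_trans (f v1 i) (f u3 i) (f u4 i), E13 i, Hp i]
  have E24 : ∀ i, (f v2 i ≠ f u4 i) ↔ Xor' (i = d) (i = p) := fun i => by
    rw [bool_ne_trans (f v2 i) (f u3 i) (f u4 i), Hd i, Hp i]
  -- distinctness of the coordinates
  have hab : a ≠ b := by
    intro h
    have h2 : hammingDist (f v0) (f v2) = 2 := (hdham v0 v2).trans d02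
    rw [hamming_card (f v0) (f v2) ∅ (fun i => by subst h; simp [D02 i, Xor'])] at h2
    simp at h2
  have hbc : b ≠ c := by
    intro h
    have h2 : hammingDist (f v1) (f v3) = 2 := (hdham v1 v3).trans d13
    rw [hamming_card (f v1) (f v3) ∅ (fun i => by subst h; simp [D13 i, Xor'])] at h2
    simp at h2
  have hac : a ≠ c := by
    intro h
    have h2 : hammingDist (f v0) (f v3) = 3 := (hdham v0 v3).trans d03
    rw [hamming_card (f v0) (f v3) {b} (fun i => by
      subst h
      rw [D03 i, Finset.mem_singleton]
      exact xor_aux1 _ _)] at h2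
    simp at h2
  have hcx : c ≠ x := by
    intro h
    have h2 : hammingDist (f v2) (f v4) = 2 := (hdham v2 v4).trans d24
    rw [hamming_card (f v2) (f v4) ∅ (fun i => by subst h; simp [D24 i, Xor'])] at h2
    simp at h2
  have hbx : b ≠ x := by
    intro h
    have h2 : hammingDist (f v1) (f v4) = 3 := (hdham v1 v4).trans d14
    rw [hamming_card (f v1) (f v4) {c} (fun i => by
      subst h
      rw [D14 i, Finset.mem_singleton]
      exact xor_aux1 _ _)] at h2
    simp at h2
  have hxa : x = a := by
    by_contra hne
    have hax : a ≠ x := fun hh => hne hh.symm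
    have h2 : hammingDist (f v0) (f v4) = 2 := by
      rw [hdham v0 v4, SimpleGraph.dist_comm]; exact d40
    rw [hamming_card (f v0) (f v4) {a, b, c, x} (fun i => by
      simp only [D04 i, Finset.mem_insert, Finset.mem_singleton]
      exact xor_aux2 _ _ _ _ (fun ⟨h1, h2⟩ => hab (h1.symm.trans h2))
        (fun ⟨h1, h2⟩ => hac (h1.symm.trans h2)) (fun ⟨h1, h2⟩ => hax (h1.symm.trans h2))
        (fun ⟨h1, h2⟩ => hbc (h1.symm.trans h2)) (fun ⟨h1, h2⟩ => hbx (h1.symm.trans h2))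
        (fun ⟨h1, h2⟩ => hcx (h1.symm.trans h2)))] at h2
    rw [Finset.card_insert_of_notMem (by simp [hab, hac, hax]),
      Finset.card_insert_of_notMem (by simp [hbc, hbx]),
      Finset.card_insert_of_notMem (by simp [hcx]), Finset.card_singleton] at h2
    omega
  have hbd : b ≠ d := by
    intro h
    have h2 : hammingDist (f v1) (f u3) = 2 := (hdham v1 u3).trans e13
    rw [hamming_card (f v1) (f u3) ∅ (fun i => by subst h; simp [E13 i, Xor'])] at h2
    simp at h2
  have had : a ≠ d := by
    intro h
    have h2 : hammingDist (f v0) (f u3) = 3 := (hdham v0 u3).trans e03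
    rw [hamming_card (f v0) (f u3) {b} (fun i => by
      subst h
      rw [E03 i, Finset.mem_singleton]
      exact xor_aux1 _ _)] at h2
    simp at h2
  have hdp : d ≠ p := by
    intro h
    have h2 : hammingDist (f v2) (f u4) = 2 := (hdham v2 u4).trans e24
    rw [hamming_card (f v2) (f u4) ∅ (fun i => by subst h; simp [E24 i, Xor'])] at h2
    simp at h2
  have hbp : b ≠ p := by
    intro h
    have h2 : hammingDist (f v1) (f u4) = 3 := (hdham v1 u4).trans e14
    rw [hamming_card (f v1) (f u4) {d} (fun i => by
      subst h
      rw [E14 i, Finset.mem_singleton]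
      exact xor_aux1 _ _)] at h2
    simp at h2
  have hpa : p = a := by
    by_contra hne
    have hap : a ≠ p := fun hh => hne hh.symm
    have h2 : hammingDist (f v0) (f u4) = 2 := by
      rw [hdham v0 u4, SimpleGraph.dist_comm]; exact e40
    rw [hamming_card (f v0) (f u4) {a, b, d, p} (fun i => by
      simp only [E04 i, Finset.mem_insert, Finset.mem_singleton]
      exact xor_aux2 _ _ _ _ (fun ⟨h1, h2⟩ => hab (h1.symm.trans h2))
        (fun ⟨h1, h2⟩ => had (h1.symm.trans h2)) (fun ⟨h1, h2⟩ => hap (h1.symm.trans h2))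
        (fun ⟨h1, h2⟩ => hbd (h1.symm.trans h2)) (fun ⟨h1, h2⟩ => hbp (h1.symm.trans h2))
        (fun ⟨h1, h2⟩ => hdp (h1.symm.trans h2)))] at h2
    rw [Finset.card_insert_of_notMem (by simp [hab, had, hap]),
      Finset.card_insert_of_notMem (by simp [hbd, hbp]),
      Finset.card_insert_of_notMem (by simp [hdp]), Finset.card_singleton] at h2
    omega
  -- c ≠ d from injectivity of f and v3 ≠ u3
  have h3u3 : v3 ≠ u3 := by
    simp only [List.pairwise_cons, List.mem_cons, List.not_mem_nil] at hdist
    exact hdist.2.2.2.1 u3 (by tauto)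
  have hcd : c ≠ d := by
    intro h
    apply h3u3
    apply hinj
    funext i
    have hni : ¬ (f v3 i ≠ f u3 i) := by
      rw [bool_ne_trans (f v3 i) (f v2 i) (f u3 i), ne_comm, Hc i, Hd i, ← h]
      simp [Xor']
    exact not_ne_iff.mp hni
  -- the final difference set for u4, v4
  have F : ∀ i, (f u4 i ≠ f v4 i) ↔ Xor' (Xor' (i = p) (i = d)) (Xor' (i = c) (i = x)) :=
    fun i => by
      have hp' : (f u4 i ≠ f u3 i) ↔ i = p := ne_comm.trans (Hp i)
      have hd' : (f u3 i ≠ f v2 i) ↔ i = d := ne_comm.trans (Hd i)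
      have h1 : (f u4 i ≠ f v2 i) ↔ Xor' (i = p) (i = d) := by
        rw [bool_ne_trans (f u4 i) (f u3 i) (f v2 i), hp', hd']
      rw [bool_ne_trans (f u4 i) (f v2 i) (f v4 i), h1, D24 i]
  have h2 : hammingDist (f u4) (f v4) = ({c, d} : Finset (Fin n)).card := by
    apply hamming_card
    intro i
    subst hpa; subst hxa
    simp only [F i, Finset.mem_insert, Finset.mem_singleton]
    exact xor_aux3 _ _ _ (fun ⟨h1, h2⟩ => hac (h1.symm.trans h2))
      (fun ⟨h1, h2⟩ => had (h1.symm.trans h2)) (fun ⟨h1, h2⟩ => hcd (h1.symm.trans h2))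
  rw [Finset.card_insert_of_notMem (by simp [hcd]), Finset.card_singleton] at h2
  have hdist2 : G.dist u4 v4 = 2 := by rw [← hdham]; exact h2
  obtain ⟨w, hw⟩ := SimpleGraph.exists_walk_of_dist_ne_zero
    (u := u4) (v := v4) (by rw [hdist2]; omega)
  rw [hdist2] at hw
  cases w with
  | nil => simp at hw
  | cons hadj q =>
    cases q with
    | nil => simp at hw
    | cons hadj2 q2 =>
      cases q2 with
      | nil => exact ⟨_, hadj, hadj2.symm⟩
      | cons h3 q3 => simp [SimpleGraph.Walk.length_cons] at hw
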